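/- Let UT_n carry an elementary G-grading given by η = (g_1,…,g_{n−1}) ∈ G^{n−1} with deg e_{i,i+1} = g_i. If UT_n admits a graded involution (a linear involution ∗ with deg x∗ = deg x for all homogeneous x), then the sequence η is symmetric, i.e., g_i = g_{n−i} for all i. -/

import Mathlib

open Matrix

/-- A matrix is homogeneous of degree `h` in the elementary grading with degree
function `d` (where `d i j` is the degree of the matrix unit `e_{ij}`) if it is upper
triangular and all of its nonzero entries sit in positions of degree `h`. -/
def IsHomD {n : ℕ} {K : Type*} [Field K] {G : Type*} [Group G]
    (d : Fin n → Fin n → G) (h : G) (x : Matrix (Fin n) (Fin n) K) : Prop :=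
  (∀ i j : Fin n, j < i → x i j = 0) ∧ ∀ i j : Fin n, x i j ≠ 0 → d i j = h

lemma sb_hom {n : ℕ} {K : Type*} [Field K] {G : Type*} [Group G]
    (d : Fin n → Fin n → G) {i j : Fin n} (hij : ¬ j < i) (c : K) :
    IsHomD d (d i j) (single i j c) := by
  refine ⟨fun p q hqp => ?_, fun p q hpq => ?_⟩
  · simp only [single, of_apply]
    rw [if_neg]
    rintro ⟨rfl, rfl⟩; exact hij hqp
  · simp only [single, of_apply] at hpq
    by_cases h : i = p ∧ j = q
    · obtain ⟨rfl, rfl⟩ := h; rfl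
    · rw [if_neg h] at hpq; exact absurd rfl hpq

lemma mul_apply_ut_left {n : ℕ} {K : Type*} [Field K] (A B : Matrix (Fin n) (Fin n) K)
    (hA : ∀ r s : Fin n, s < r → A r s = 0) (p c : Fin n)
    (hB : ∀ k : Fin n, p < k → B k c = 0) :
    (A * B) p c = A p p * B p c := by
  rw [Matrix.mul_apply]
  refine Finset.sum_eq_single p (fun k _ hk => ?_) (fun h => absurd (Finset.mem_univ p) h)
  rcases lt_or_gt_of_ne hk with h | h
  · rw [hA p k h, zero_mul]
  · rw [hB k h, mul_zero]

lemma mul_apply_ut_right {n : ℕ} {K : Type*} [Field K] (A B : Matrix (Fin n) (Fin n) K)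
    (hB : ∀ r s : Fin n, s < r → B r s = 0) (p q : Fin n)
    (hA : ∀ k : Fin n, k < q → A p k = 0) :
    (A * B) p q = A p q * B q q := by
  rw [Matrix.mul_apply]
  refine Finset.sum_eq_single q (fun k _ hk => ?_) (fun h => absurd (Finset.mem_univ q) h)
  rcases lt_or_gt_of_ne hk with h | h
  · rw [hA k h, zero_mul]
  · rw [hB k q h, mul_zero]

lemma star_ut {n : ℕ} {K : Type*} [Field K] {G : Type*} [Group G]
    (d : Fin n → Fin n → G)
    (star : Matrix (Fin n) (Fin n) K → Matrix (Fin n) (Fin n) K)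
    (hlin : IsLinearMap K star)
    (hgr : ∀ (h : G) (x : Matrix (Fin n) (Fin n) K), IsHomD d h x → IsHomD d h (star x)) :
    ∀ x : Matrix (Fin n) (Fin n) K, (∀ i j : Fin n, j < i → x i j = 0) →
      (∀ a b : Fin n, b < a → star x a b = 0) := by
  intro x hx a b hba
  have hLx : star x = (IsLinearMap.mk' star hlin) x := rfl
  rw [hLx]
  conv_lhs => rw [matrix_eq_sum_single x]
  rw [map_sum, Matrix.sum_apply]
  refine Finset.sum_eq_zero fun i _ => ?_
  rw [map_sum, Matrix.sum_apply]
  refine Finset.sum_eq_zero fun j _ => ?_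
  by_cases hji : j < i
  · rw [hx i j hji, single_zero,
      map_zero, Matrix.zero_apply]
  · exact (hgr _ _ (sb_hom d hji (x i j))).1 a b hba

lemma my_star_one {n : ℕ} {K : Type*} [Field K] {G : Type*} [Group G]
    (d : Fin n → Fin n → G)
    (star : Matrix (Fin n) (Fin n) K → Matrix (Fin n) (Fin n) K)
    (hlin : IsLinearMap K star)
    (hinv : ∀ x : Matrix (Fin n) (Fin n) K, (∀ i j : Fin n, j < i → x i j = 0) →
      star (star x) = x)
    (hanti : ∀ x y : Matrix (Fin n) (Fin n) K,
      (∀ i j : Fin n, j < i → x i j = 0) → (∀ i j : Fin n, j < i → y i j = 0) →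
      star (x * y) = star y * star x)
    (hgr : ∀ (h : G) (x : Matrix (Fin n) (Fin n) K), IsHomD d h x → IsHomD d h (star x)) :
    star (1 : Matrix (Fin n) (Fin n) K) = 1 := by
  have ut1 : ∀ i j : Fin n, j < i → (1 : Matrix (Fin n) (Fin n) K) i j = 0 := fun i j hji =>
    Matrix.one_apply_ne (ne_of_gt hji)
  have key : ∀ y : Matrix (Fin n) (Fin n) K, (∀ i j : Fin n, j < i → y i j = 0) →
      y = star 1 * y := by
    intro y hy
    have h1 := hanti (star y) 1 (star_ut d star hlin hgr y hy) ut1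
    rw [mul_one, hinv y hy] at h1
    exact h1
  have h := key 1 ut1
  rw [mul_one] at h
  exact h.symm

lemma core_lemma {n : ℕ} {K : Type*} [Field K] {G : Type*} [Group G]
    (d : Fin n → Fin n → G)
    (star : Matrix (Fin n) (Fin n) K → Matrix (Fin n) (Fin n) K)
    (hlin : IsLinearMap K star)
    (hinv : ∀ x : Matrix (Fin n) (Fin n) K, (∀ i j : Fin n, j < i → x i j = 0) →
      star (star x) = x)
    (hanti : ∀ x y : Matrix (Fin n) (Fin n) K,
      (∀ i j : Fin n, j < i → x i j = 0) → (∀ i j : Fin n, j < i → y i j = 0) →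
      star (x * y) = star y * star x)
    (hgr : ∀ (h : G) (x : Matrix (Fin n) (Fin n) K), IsHomD d h x → IsHomD d h (star x))
    (i j : Fin n) (hij : (j : ℕ) = (i : ℕ) + 1) :
    ∃ p q : Fin n, p ≤ q ∧ star (single j j (1:K)) p p = 1 ∧
      star (single i i (1:K)) q q = 1 ∧ d p q = d i j := by
  classical
  have hijlt : i < j := by rw [Fin.lt_def, hij]; omega
  have hnlt : ¬ j < i := not_lt.mpr hijlt.le
  have utdiag : ∀ a : Fin n, ∀ r s : Fin n, s < r → single a a (1:K) r s = 0 :=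
    fun a => (sb_hom d (lt_irrefl a) (1:K)).1
  have utE : ∀ a : Fin n, ∀ r s : Fin n, s < r → star (single a a (1:K)) r s = 0 :=
    fun a => (hgr _ _ (sb_hom d (lt_irrefl a) (1:K))).1
  set z := star (single i j (1:K)) with hz
  have hzhom : IsHomD d (d i j) z := hgr _ _ (sb_hom d hnlt 1)
  have hzut := hzhom.1
  have hute : ∀ r s : Fin n, s < r → single i j (1:K) r s = 0 := (sb_hom d hnlt 1).1
  have hzne : z ≠ 0 := by
    intro h0
    have h1 := hinv (single i j (1:K)) hute
    rw [← hz, h0,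
      show star (0 : Matrix (Fin n) (Fin n) K) = 0 from (IsLinearMap.mk' star hlin).map_zero] at h1
    have h2 := congrFun (congrFun h1 i) j
    simp [single] at h2
  have hEz : z = star (single j j (1:K)) * z := by
    have h1 : single i j (1:K) * single j j (1:K) = single i j (1:K) := by
      rw [single_mul_single_same, one_mul]
    have h2 := hanti (single i j (1:K)) (single j j (1:K)) hute (utdiag j)
    rw [h1] at h2; exact h2
  have hzE : z = z * star (single i i (1:K)) := by
    have h1 : single i i (1:K) * single i j (1:K) = single i j (1:K) := by
      rw [single_mul_single_same, one_mul]
    have h2 := hanti (single i i (1:K)) (single i j (1:K)) (utdiag i) hute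
    rw [h1] at h2; exact h2
  have hPne : (Finset.univ.filter (fun k => z k ≠ 0)).Nonempty := by
    by_contra h
    rw [Finset.not_nonempty_iff_eq_empty, Finset.filter_eq_empty_iff] at h
    apply hzne
    ext a b
    have h2 : ¬ z a ≠ 0 := h (Finset.mem_univ a)
    rw [not_not] at h2
    rw [Matrix.zero_apply]
    exact congrFun h2 b
  set p := (Finset.univ.filter (fun k => z k ≠ 0)).max' hPne with hp
  have hpmem := (Finset.univ.filter (fun k => z k ≠ 0)).max'_mem hPne
  rw [Finset.mem_filter] at hpmem
  have hprow : z p ≠ 0 := hpmem.2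
  have hpmax : ∀ k : Fin n, p < k → z k = 0 := by
    intro k hk
    by_contra h
    exact absurd (Finset.le_max' _ k (Finset.mem_filter.mpr ⟨Finset.mem_univ k, h⟩))
      (not_le.mpr hk)
  have hQne : (Finset.univ.filter (fun c => z p c ≠ 0)).Nonempty := by
    by_contra h
    rw [Finset.not_nonempty_iff_eq_empty, Finset.filter_eq_empty_iff] at h
    apply hprow
    funext b
    have h2 := h (Finset.mem_univ b)
    rwa [not_not] at h2
  set q := (Finset.univ.filter (fun c => z p c ≠ 0)).min' hQne with hq
  have hqmem := (Finset.univ.filter (fun c => z p c ≠ 0)).min'_mem hQne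
  rw [Finset.mem_filter] at hqmem
  have hzpq : z p q ≠ 0 := hqmem.2
  have hqmin : ∀ k : Fin n, k < q → z p k = 0 := by
    intro k hk
    by_contra h
    exact absurd (Finset.min'_le _ k (Finset.mem_filter.mpr ⟨Finset.mem_univ k, h⟩))
      (not_le.mpr hk)
  have h1 : z p q = star (single j j (1:K)) p p * z p q := by
    conv_lhs => rw [hEz]
    exact mul_apply_ut_left _ _ (utE j) p q (fun k hk => congrFun (hpmax k hk) q)
  have hEjp : star (single j j (1:K)) p p = 1 := by
    rcases mul_left_eq_self₀.mp h1.symm with h | h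
    · exact h
    · exact absurd h hzpq
  have h2 : z p q = z p q * star (single i i (1:K)) q q := by
    conv_lhs => rw [hzE]
    exact mul_apply_ut_right _ _ (utE i) p q hqmin
  have hEiq : star (single i i (1:K)) q q = 1 := by
    rcases mul_right_eq_self₀.mp h2.symm with h | h
    · exact h
    · exact absurd h hzpq
  exact ⟨p, q, not_lt.mp (fun h => hzpq (hzut p q h)), hEjp, hEiq, hzhom.2 p q hzpq⟩

/-- if the upper triangular matrices, with the elementary `G`-grading
whose degree function is `d` (so `η i = d i (i+1)`), admit a graded linear involution,
then the sequence `η` is symmetric: `g_i = g_{n-i}`, i.e.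
`d i j = d (rev j) (rev i)` for consecutive `i, j`. -/
theorem graded_involution_implies_symmetric {n : ℕ} {K : Type*} [Field K]
    {G : Type*} [Group G] (hchar : (2 : K) ≠ 0)
    (d : Fin n → Fin n → G)
    (hdm : ∀ i j k : Fin n, i ≤ j → j ≤ k → d i j * d j k = d i k)
    (star : Matrix (Fin n) (Fin n) K → Matrix (Fin n) (Fin n) K)
    (hlin : IsLinearMap K star)
    (hinv : ∀ x : Matrix (Fin n) (Fin n) K, (∀ i j : Fin n, j < i → x i j = 0) →
      star (star x) = x)
    (hanti : ∀ x y : Matrix (Fin n) (Fin n) K,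
      (∀ i j : Fin n, j < i → x i j = 0) → (∀ i j : Fin n, j < i → y i j = 0) →
      star (x * y) = star y * star x)
    (hgr : ∀ (h : G) (x : Matrix (Fin n) (Fin n) K), IsHomD d h x → IsHomD d h (star x)) :
    ∀ i j : Fin n, (j : ℕ) = (i : ℕ) + 1 → d i j = d j.rev i.rev := by
  intro i j hij
  classical
  obtain ⟨N, rfl⟩ : ∃ N, n = N + 1 := ⟨n - 1, (Nat.succ_pred_eq_of_pos i.pos).symm⟩
  set E : Fin (N + 1) → Matrix (Fin (N + 1)) (Fin (N + 1)) K :=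
    fun a => star (single a a (1 : K)) with hE
  have utdiag : ∀ a : Fin (N + 1), ∀ r s : Fin (N + 1), s < r →
      single a a (1 : K) r s = 0 := fun a => (sb_hom d (lt_irrefl a) (1 : K)).1
  have utE : ∀ a : Fin (N + 1), ∀ r s : Fin (N + 1), s < r → E a r s = 0 :=
    fun a => (hgr _ _ (sb_hom d (lt_irrefl a) (1 : K))).1
  have idem : ∀ a, E a * E a = E a := by
    intro a
    have h2 := hanti (single a a (1 : K)) (single a a (1 : K))
      (utdiag a) (utdiag a)
    rw [single_mul_single_same, one_mul] at h2
    exact h2.symm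
  have orth : ∀ a b : Fin (N + 1), a ≠ b → E a * E b = 0 := by
    intro a b hab
    have h2 := hanti (single b b (1 : K)) (single a a (1 : K))
      (utdiag b) (utdiag a)
    have h0 : single b b (1 : K) * single a a (1 : K) = 0 :=
      single_mul_single_of_ne (h := Ne.symm hab) ..
    rw [h0, show star (0 : Matrix (Fin (N + 1)) (Fin (N + 1)) K) = 0 from
        (IsLinearMap.mk' star hlin).map_zero] at h2
    exact h2.symm
  have diag_mul : ∀ a b k, (E a * E b) k k = E a k k * E b k k := fun a b k =>
    mul_apply_ut_left (E a) (E b) (utE a) k k (fun k' h => utE b k' k h)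
  have diag01 : ∀ a k, E a k k = 0 ∨ E a k k = 1 := by
    intro a k
    have h1 := congrFun (congrFun (idem a) k) k
    rw [diag_mul] at h1
    have h2 : E a k k * (E a k k - 1) = 0 := by rw [mul_sub, h1, mul_one, sub_self]
    rcases mul_eq_zero.mp h2 with h | h
    · exact Or.inl h
    · exact Or.inr (sub_eq_zero.mp h)
  have hone : ∑ a : Fin (N + 1), single a a (1 : K) = 1 := by
    ext r s
    rw [Matrix.sum_apply]
    by_cases hrs : r = s
    · subst hrs
      rw [Matrix.one_apply_eq]
      rw [Finset.sum_eq_single r (fun a _ ha => by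
        simp only [single, of_apply]
        rw [if_neg]; rintro ⟨rfl, -⟩; exact ha rfl)
        (fun h => absurd (Finset.mem_univ r) h)]
      simp [single]
    · rw [Matrix.one_apply_ne hrs]
      refine Finset.sum_eq_zero fun a _ => ?_
      simp only [single, of_apply]
      rw [if_neg]; rintro ⟨rfl, rfl⟩; exact hrs rfl
  have sumE : ∑ a, E a = 1 := by
    have h1 : ∑ a, E a = star (∑ a : Fin (N + 1), single a a (1 : K)) :=
      (map_sum (IsLinearMap.mk' star hlin) _ _).symm
    rw [h1, hone, my_star_one d star hlin hinv hanti hgr]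
  have diag_sum : ∀ k : Fin (N + 1), ∑ a, E a k k = 1 := by
    intro k
    have h1 := congrFun (congrFun sumE k) k
    rw [Matrix.sum_apply] at h1
    rw [h1, Matrix.one_apply_eq]
  have exists_one : ∀ k : Fin (N + 1), ∃ a, E a k k = 1 := by
    intro k
    obtain ⟨a, -, ha⟩ := Finset.exists_ne_zero_of_sum_ne_zero
      (by rw [diag_sum k]; exact one_ne_zero)
    exact ⟨a, (diag01 a k).resolve_left ha⟩
  have uniq : ∀ (k a b : Fin (N + 1)), E a k k = 1 → E b k k = 1 → a = b := by
    intro k a b ha hb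
    by_contra hab
    have h1 := congrFun (congrFun (orth a b hab) k) k
    rw [diag_mul, ha, hb, one_mul, Matrix.zero_apply] at h1
    exact one_ne_zero h1
  set m : Fin (N + 1) → Fin (N + 1) := fun k => Classical.choose (exists_one k) with hmdef
  have hm : ∀ k, E (m k) k k = 1 := fun k => Classical.choose_spec (exists_one k)
  have key : ∀ a b : Fin (N + 1), (b : ℕ) = (a : ℕ) + 1 →
      ∃ p q : Fin (N + 1), p ≤ q ∧ m p = b ∧ m q = a ∧ d p q = d a b := by
    intro a b hab
    obtain ⟨p, q, hpq, hEb, hEa, hd⟩ := core_lemma d star hlin hinv hanti hgr a b hab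
    exact ⟨p, q, hpq, uniq p (m p) b (hm p) hEb, uniq q (m q) a (hm q) hEa, hd⟩
  have surj : Function.Surjective m := by
    intro t
    by_cases h : (t : ℕ) + 1 < N + 1
    · obtain ⟨p, q, -, -, hq, -⟩ := key t ⟨(t : ℕ) + 1, h⟩ rfl
      exact ⟨q, hq⟩
    · have hN : 1 ≤ N := by have := j.isLt; omega
      have ht : (t : ℕ) = N := by have := t.isLt; omega
      obtain ⟨p, q, -, hp, -, -⟩ := key ⟨(t : ℕ) - 1, by omega⟩ t (by simp; omega)
      exact ⟨p, hp⟩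
  have bij : Function.Bijective m := ⟨Finite.injective_iff_surjective.mpr surj, surj⟩
  set σe := Equiv.ofBijective m bij with hσe
  have rel : ∀ a b : Fin (N + 1), (b : ℕ) = (a : ℕ) + 1 →
      σe.symm b < σe.symm a ∧ d (σe.symm b) (σe.symm a) = d a b := by
    intro a b hab
    obtain ⟨p, q, hpq, hmp, hmq, hd⟩ := key a b hab
    have hpb : σe.symm b = p := by
      rw [show b = σe p from hmp.symm, Equiv.symm_apply_apply]
    have hqa : σe.symm a = q := by
      rw [show a = σe q from hmq.symm, Equiv.symm_apply_apply]
    have hne : p ≠ q := by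
      intro hpq'
      subst hpq'
      rw [hmp] at hmq
      subst hmq
      omega
    rw [hpb, hqa]
    exact ⟨lt_of_le_of_ne hpq hne, hd⟩
  set f : Fin (N + 1) → Fin (N + 1) := fun t => (σe.symm t).rev with hf
  have hfmono : StrictMono f := by
    rw [Fin.strictMono_iff_lt_succ]
    intro t
    exact Fin.rev_lt_rev.mpr (rel t.castSucc t.succ (by simp)).1
  have hfsurj : Function.Surjective f :=
    Fin.rev_involutive.surjective.comp σe.symm.surjective
  haveI : WellFoundedLT (Fin (N + 1)) := Finite.to_wellFoundedLT
  have hfid : f = id := (hfmono.range_inj strictMono_id).mp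
    (by rw [Set.range_id, Set.range_eq_univ.mpr hfsurj])
  have hσ : ∀ t : Fin (N + 1), σe.symm t = t.rev := by
    intro t
    have h1 : (σe.symm t).rev = t := congrFun hfid t
    rw [← Fin.rev_rev (σe.symm t), h1]
  have h := (rel i j hij).2
  rw [hσ i, hσ j] at h
  exact h.symm
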